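/- Let L be a complete enriched Lie algebra and x ∈ L. Then the centralizer C = { y ∈ L : [x,y] = 0 } satisfies C = lim_α C_α where C_α = { z ∈ L/I_α : [ρ_α x, z] = 0 }; consequently the subspace [x, L] is closed in L. -/

import Mathlib

section EnrichedPre

variable {L : Type*} [LieRing L] [LieAlgebra ℚ L]

/-- `lcsIn A n` is the span of iterated Lie brackets of length `n+1` with entries in `A`
(so `lcsIn ⊤ (k-1)` is the `k`-th term `L^k` of the lower central series). -/
def lcsIn (A : Submodule ℚ L) : ℕ → Submodule ℚ L
  | 0 => A
  | n + 1 => Submodule.span ℚ {z : L | ∃ x ∈ A, ∃ y ∈ lcsIn A n, ⁅x, y⁆ = z}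

/-- The closure of a subspace `S` in an enriched Lie algebra `(L, {I α})`:
the set of limits of coherent families of elements of `S`, i.e. of those `x`
whose image in each `L ⧸ I α` lies in the image of `S`. -/
def encl {ι : Type*} (I : ι → LieIdeal ℚ L) (S : Submodule ℚ L) : Submodule ℚ L where
  carrier := {x : L | ∀ α, ∃ s ∈ S, x - s ∈ (I α : Submodule ℚ L)}
  add_mem' := by
    intro a b ha hb α
    obtain ⟨s, hs, h1⟩ := ha α
    obtain ⟨t, ht, h2⟩ := hb α
    exact ⟨s + t, S.add_mem hs ht, by
      simpa [add_sub_add_comm] using Submodule.add_mem _ h1 h2⟩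
  zero_mem' := fun α => ⟨0, S.zero_mem, by simp⟩
  smul_mem' := by
    intro c a ha α
    obtain ⟨s, hs, h1⟩ := ha α
    exact ⟨c • s, S.smul_mem c hs, by
      simpa [smul_sub] using Submodule.smul_mem _ c h1⟩

/-- `(L, {I α})` is an enriched Lie algebra: a directed family of ideals with
finite-dimensional nilpotent quotients and trivial intersection. -/
def IsEnriched {ι : Type*} (I : ι → LieIdeal ℚ L) : Prop :=
  (∀ α β, ∃ γ, I γ ≤ I α ⊓ I β) ∧
  (∀ α, FiniteDimensional ℚ (L ⧸ I α)) ∧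
  (∀ α, LieRing.IsNilpotent (L ⧸ I α)) ∧
  (⨅ α, I α) = ⊥

/-- Completeness of `(L, {I α})`: every coherent family in `lim_α L/I α`
(presented by compatible representatives) has a limit in `L`. -/
def IsCompleteWrt {ι : Type*} (I : ι → LieIdeal ℚ L) : Prop :=
  ∀ y : ι → L, (∀ α β, I β ≤ I α → y β - y α ∈ (I α : Submodule ℚ L)) →
    ∃ x : L, ∀ α, x - y α ∈ (I α : Submodule ℚ L)

end EnrichedPre

section CosetLemmas
variable {V : Type*} [AddCommGroup V] [Module ℚ V]

/-- The coset `v + W` as a set. -/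
def cosetOf (v : V) (W : Submodule ℚ V) : Set V := {z | z - v ∈ W}

/-- `A` is a coset of a submodule containing `J`. -/
def IsCosetGe (J : Submodule ℚ V) (A : Set V) : Prop :=
  ∃ v W, J ≤ W ∧ A = cosetOf v W

/-- Thickening of a set by a submodule: `A + J`. -/
def trJ (A : Set V) (J : Submodule ℚ V) : Set V := {z | ∃ a ∈ A, z - a ∈ J}

/-- The linear direction spanned by differences of elements of `A`. -/
def dirSpan (A : Set V) : Submodule ℚ V :=
  Submodule.span ℚ {z | ∃ a ∈ A, ∃ b ∈ A, a - b = z}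

lemma mem_cosetOf {z v : V} {W : Submodule ℚ V} : z ∈ cosetOf v W ↔ z - v ∈ W := Iff.rfl

lemma self_mem_cosetOf (v : V) (W : Submodule ℚ V) : v ∈ cosetOf v W := by
  simp [cosetOf]

lemma cosetOf_rebase {x v : V} {W : Submodule ℚ V} (h : x ∈ cosetOf v W) :
    cosetOf v W = cosetOf x W := by
  ext z
  show z - v ∈ W ↔ z - x ∈ W
  have hx : x - v ∈ W := h
  constructor <;> intro hz
  · simpa using sub_mem hz hx
  · simpa [sub_add_sub_cancel] using add_mem hz hx

lemma cosetOf_inter (v : V) (W W' : Submodule ℚ V) :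
    cosetOf v W ∩ cosetOf v W' = cosetOf v (W ⊓ W') := rfl

lemma dirSpan_mono {A B : Set V} (h : A ⊆ B) : dirSpan A ≤ dirSpan B := by
  apply Submodule.span_mono
  rintro z ⟨a, ha, b, hb, rfl⟩
  exact ⟨a, h ha, b, h hb, rfl⟩

lemma dirSpan_cosetOf (v : V) (W : Submodule ℚ V) : dirSpan (cosetOf v W) = W := by
  apply le_antisymm
  · rw [dirSpan, Submodule.span_le]
    rintro z ⟨a, ha, b, hb, rfl⟩
    have := sub_mem (mem_cosetOf.1 ha) (mem_cosetOf.1 hb)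
    simpa [sub_sub_sub_cancel_right] using this
  · intro w hw
    exact Submodule.subset_span ⟨v + w, by simpa [cosetOf] using hw, v,
      self_mem_cosetOf v W, by abel⟩

lemma cosetOf_eq_of_subset {v v' : V} {W : Submodule ℚ V}
    (h : cosetOf v W ⊆ cosetOf v' W) : cosetOf v W = cosetOf v' W := by
  have hv : v - v' ∈ W := h (self_mem_cosetOf v W)
  ext z
  constructor <;> intro hz
  · exact h hz
  · show z - v ∈ W
    have : z - v' ∈ W := hz
    simpa using sub_mem this hv

lemma trJ_mono {A B : Set V} {J J' : Submodule ℚ V} (h : A ⊆ B) (hJ : J ≤ J') :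
    trJ A J ⊆ trJ B J' := by
  rintro z ⟨a, ha, hz⟩
  exact ⟨a, h ha, hJ hz⟩

lemma subset_trJ (A : Set V) (J : Submodule ℚ V) : A ⊆ trJ A J :=
  fun z hz => ⟨z, hz, by simp⟩

lemma trJ_cosetOf (v : V) (W J : Submodule ℚ V) :
    trJ (cosetOf v W) J = cosetOf v (W ⊔ J) := by
  ext z
  constructor
  · rintro ⟨a, ha, hz⟩
    have : z - v = (a - v) + (z - a) := by abel
    rw [mem_cosetOf, this]
    exact add_mem (Submodule.mem_sup_left ha) (Submodule.mem_sup_right hz)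
  · intro hz
    obtain ⟨w, hw, j, hj, hwj⟩ := Submodule.mem_sup.1 hz
    exact ⟨v + w, by simpa [cosetOf] using hw, by rw [show z - (v + w) = z - v - w by abel, ← hwj]; simpa using hj⟩

lemma trJ_cosetOf_self {v : V} {W J : Submodule ℚ V} (h : J ≤ W) :
    trJ (cosetOf v W) J = cosetOf v W := by
  rw [trJ_cosetOf, sup_of_le_left h]

/-- A nonempty downward-directed family of cosets (of submodules containing `J`)
inside a space with finite-dimensional quotient by `J` has a minimum member. -/
lemma exists_min_coset (J : Submodule ℚ V) [FiniteDimensional ℚ (V ⧸ J)]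
    (𝒞 : Set (Set V)) (hne : 𝒞.Nonempty)
    (hcos : ∀ A ∈ 𝒞, IsCosetGe J A)
    (hdir : ∀ A ∈ 𝒞, ∀ B ∈ 𝒞, ∃ C ∈ 𝒞, C ⊆ A ∧ C ⊆ B) :
    ∃ M ∈ 𝒞, ∀ A ∈ 𝒞, M ⊆ A := by
  classical
  set g : Set V → ℕ := fun A => Module.finrank ℚ ((dirSpan A).map J.mkQ) with hg
  have himg : (g '' 𝒞).Nonempty := hne.image g
  have hmem := Nat.sInf_mem himg
  obtain ⟨M, hM, hgM⟩ := hmem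
  refine ⟨M, hM, fun A hA => ?_⟩
  obtain ⟨C, hC, hCM, hCA⟩ := hdir M hM A hA
  obtain ⟨c, Wc, hJc, rfl⟩ := hcos C hC
  obtain ⟨m, Wm, hJm, rfl⟩ := hcos M hM
  have hWle : Wc ≤ Wm := by
    have := dirSpan_mono hCM
    rwa [dirSpan_cosetOf, dirSpan_cosetOf] at this
  have hmaple : Wc.map J.mkQ ≤ Wm.map J.mkQ := Submodule.map_mono hWle
  have hrk : Module.finrank ℚ (Wm.map J.mkQ) ≤ Module.finrank ℚ (Wc.map J.mkQ) := by
    have h2 : sInf (g '' 𝒞) ≤ g (cosetOf c Wc) := Nat.sInf_le (Set.mem_image_of_mem g hC)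
    rw [← hgM] at h2
    simp only [hg] at h2
    rw [dirSpan_cosetOf, dirSpan_cosetOf] at h2
    exact h2
  have hmapeq : Wc.map J.mkQ = Wm.map J.mkQ :=
    Submodule.eq_of_le_of_finrank_le hmaple hrk
  have hWeq : Wc = Wm := by
    have := congrArg (Submodule.comap J.mkQ) hmapeq
    rw [Submodule.comap_map_mkQ, Submodule.comap_map_mkQ] at this
    rwa [sup_of_le_right hJc, sup_of_le_right hJm] at this
  subst hWeq
  have := cosetOf_eq_of_subset hCM
  rw [← this]
  exact hCA

end CosetLemmas
section Selection
variable {V : Type*} [AddCommGroup V] [Module ℚ V]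

/-- **Coherent selection.** Given a directed family of submodules `I α` with
finite-dimensional quotients and a compatible family of cosets `S α` (each a coset of a
submodule containing `I α`), one can select elements `a α ∈ S α` that are coherent. -/
lemma coherent_selection {ι : Type*} (I : ι → Submodule ℚ V)
    (hdir : ∀ α β, ∃ γ, I γ ≤ I α ⊓ I β)
    (hfd : ∀ α, FiniteDimensional ℚ (V ⧸ I α))
    (S : ι → Set V)
    (hcos : ∀ α, IsCosetGe (I α) (S α))
    (hmono : ∀ α β, I β ≤ I α → S β ⊆ S α) :
    ∃ a : ι → V, (∀ α, a α ∈ S α) ∧ ∀ α β, I β ≤ I α → a β - a α ∈ I α := by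
  classical
  haveI := hfd
  -- admissible families of cosets refining `S`
  let Adm : (ι → Set V) → Prop := fun A =>
    (∀ α, IsCosetGe (I α) (A α)) ∧ (∀ α, A α ⊆ S α) ∧
      ∀ α β, I β ≤ I α → A β ⊆ A α
  have hAdmS : Adm S := ⟨hcos, fun α => le_rfl, hmono⟩
  -- Zorn: a minimal admissible family exists
  obtain ⟨A, hA, hAmin⟩ :
      ∃ A, Adm A ∧ ∀ B, Adm B → (∀ α, B α ⊆ A α) → ∀ α, A α ⊆ B α := by
    have hih : ∀ c ⊆ {A : (ι → Set V)ᵒᵈ | Adm (OrderDual.ofDual A)}, IsChain (· ≤ ·) c →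
        ∃ ub ∈ {A : (ι → Set V)ᵒᵈ | Adm (OrderDual.ofDual A)}, ∀ z ∈ c, z ≤ ub := by
      intro c hcs hc
      rcases c.eq_empty_or_nonempty with rfl | ⟨A₀, hA₀⟩
      · exact ⟨OrderDual.toDual S, hAdmS, fun z hz => absurd hz (Set.notMem_empty z)⟩
      · -- minimum of a nonempty chain, componentwise
        have key : ∀ α, ∃ M ∈ (fun A : (ι → Set V)ᵒᵈ => OrderDual.ofDual A α) '' c,
            ∀ T ∈ (fun A : (ι → Set V)ᵒᵈ => OrderDual.ofDual A α) '' c, M ⊆ T := by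
          intro α
          apply exists_min_coset (I α)
          · exact ⟨_, Set.mem_image_of_mem _ hA₀⟩
          · rintro T ⟨A, hAc, rfl⟩
            exact (hcs hAc).1 α
          · rintro T ⟨A, hAc, rfl⟩ T' ⟨A', hA'c, rfl⟩
            rcases eq_or_ne A A' with rfl | hne
            · exact ⟨_, Set.mem_image_of_mem _ hAc, le_rfl, le_rfl⟩
            · rcases hc hAc hA'c hne with h | h
              · exact ⟨_, Set.mem_image_of_mem _ hA'c, fun z hz => h α hz, le_rfl⟩
              · exact ⟨_, Set.mem_image_of_mem _ hAc, le_rfl, fun z hz => h α hz⟩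
        choose E hEmem hEmin using key
        refine ⟨OrderDual.toDual E, ?_, ?_⟩
        · constructor
          · intro α
            show IsCosetGe (I α) (E α)
            obtain ⟨A, hAc, hAE⟩ := hEmem α
            rw [← hAE]; exact (hcs hAc).1 α
          constructor
          · intro α
            show E α ⊆ S α
            obtain ⟨A, hAc, hAE⟩ := hEmem α
            rw [← hAE]; exact (hcs hAc).2.1 α
          · intro α β hle
            show E β ⊆ E α
            obtain ⟨A', hA'c, hA'E⟩ := hEmem β
            obtain ⟨A'', hA''c, hA''E⟩ := hEmem α
            rcases eq_or_ne A' A'' with rfl | hne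
            · rw [← hA'E, ← hA''E]; exact (hcs hA'c).2.2 α β hle
            · rcases hc hA'c hA''c hne with h | h
              · -- h : A' ≤ᵈ A'', i.e. A'' ≤ A' as functions
                have h1 : E β ⊆ OrderDual.ofDual A'' β :=
                  hEmin β _ (Set.mem_image_of_mem _ hA''c)
                rw [← hA''E]
                exact fun z hz => (hcs hA''c).2.2 α β hle (h1 hz)
              · -- h : A'' ≤ᵈ A', i.e. A' ≤ A'' as functions
                rw [← hA'E, ← hA''E]
                exact fun z hz => h α ((hcs hA'c).2.2 α β hle hz)
        · intro z hz α
          exact hEmin α _ (Set.mem_image_of_mem _ hz)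
    obtain ⟨m, hm⟩ := zorn_le₀ (α := (ι → Set V)ᵒᵈ) {A | Adm (OrderDual.ofDual A)} hih
    refine ⟨OrderDual.ofDual m, hm.1, fun B hB hBm => ?_⟩
    have hBmem : (OrderDual.toDual B : (ι → Set V)ᵒᵈ) ∈
        {A : (ι → Set V)ᵒᵈ | Adm (OrderDual.ofDual A)} := hB
    have h2 := hm.2 hBmem (fun α => hBm α)
    exact fun α => h2 α
  obtain ⟨hAcos, hAS, hAcompat⟩ := hA
  -- Step 1: stability: `A γ ⊆ A δ + I γ` whenever `I δ ≤ I γ`.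
  have hstar : ∀ γ δ, I δ ≤ I γ → A γ ⊆ trJ (A δ) (I γ) := by
    have key : ∀ γ, ∃ M ∈ {T | ∃ δ, I δ ≤ I γ ∧ T = trJ (A δ) (I γ)},
        ∀ T ∈ {T | ∃ δ, I δ ≤ I γ ∧ T = trJ (A δ) (I γ)}, M ⊆ T := by
      intro γ
      apply exists_min_coset (I γ)
      · exact ⟨trJ (A γ) (I γ), γ, le_rfl, rfl⟩
      · rintro T ⟨δ, hδ, rfl⟩
        obtain ⟨v, W, hJW, hW⟩ := hAcos δ
        exact ⟨v, W ⊔ I γ, le_sup_right, by rw [hW, trJ_cosetOf]⟩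
      · rintro T ⟨δ₁, hδ₁, rfl⟩ T' ⟨δ₂, hδ₂, rfl⟩
        obtain ⟨δ₃, hδ₃⟩ := hdir δ₁ δ₂
        refine ⟨trJ (A δ₃) (I γ), ⟨δ₃, (hδ₃.trans inf_le_left).trans hδ₁, rfl⟩, ?_, ?_⟩
        · exact trJ_mono (hAcompat δ₁ δ₃ (hδ₃.trans inf_le_left)) le_rfl
        · exact trJ_mono (hAcompat δ₂ δ₃ (hδ₃.trans inf_le_right)) le_rfl
    choose E hEmem hEmin using key
    have hEsubA : ∀ γ, E γ ⊆ A γ := by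
      intro γ
      have h1 : E γ ⊆ trJ (A γ) (I γ) := hEmin γ _ ⟨γ, le_rfl, rfl⟩
      obtain ⟨v, W, hJW, hW⟩ := hAcos γ
      rwa [hW, trJ_cosetOf_self hJW, ← hW] at h1
    have hAdmE : Adm E := by
      refine ⟨?_, fun γ => (hEsubA γ).trans (hAS γ), ?_⟩
      · intro γ
        obtain ⟨δ, hδ, hT⟩ := hEmem γ
        obtain ⟨v, W, hJW, hW⟩ := hAcos δ
        exact ⟨v, W ⊔ I γ, le_sup_right, by rw [hT, hW, trJ_cosetOf]⟩
      · intro α β hle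
        obtain ⟨δ, hδ, hT⟩ := hEmem α
        obtain ⟨δ', hδ'⟩ := hdir δ β
        have h1 : E β ⊆ trJ (A δ') (I β) :=
          hEmin β _ ⟨δ', hδ'.trans inf_le_right, rfl⟩
        rw [hT]
        exact h1.trans (trJ_mono (hAcompat δ δ' (hδ'.trans inf_le_left)) hle)
    have hAE : ∀ γ, A γ ⊆ E γ := hAmin E hAdmE hEsubA
    intro γ δ hle
    exact (hAE γ).trans (hEmin γ _ ⟨δ, hle, rfl⟩)
  -- Step 2: each `A α` is contained in a single `I α`-coset.
  have hsingle : ∀ α u w, u ∈ A α → w ∈ A α → u - w ∈ I α := by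
    intro α₀ u a hu ha
    suffices hsuff : A α₀ ⊆ cosetOf a (I α₀) from hsuff hu
    set D : ι → Set V := fun δ => A δ ∩ cosetOf a (I α₀) with hDdef
    have hDsub : ∀ δ, D δ ⊆ A δ := fun δ => Set.inter_subset_left
    have hDsub' : ∀ δ, D δ ⊆ cosetOf a (I α₀) := fun δ => Set.inter_subset_right
    have hDmono : ∀ δ δ', I δ' ≤ I δ → D δ' ⊆ D δ := fun δ δ' h =>
      Set.inter_subset_inter_left _ (hAcompat δ δ' h)
    have hDcos : ∀ δ, I δ ≤ I α₀ → ∃ d W', D δ = cosetOf d W' := by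
      intro δ hδ
      obtain ⟨v, W, hJW, hW⟩ := hAcos δ
      obtain ⟨d, hdA, hda⟩ := hstar α₀ δ hδ ha
      have hd1 : d ∈ cosetOf a (I α₀) := by
        show d - a ∈ I α₀
        simpa using neg_mem hda
      refine ⟨d, W ⊓ I α₀, ?_⟩
      have e1 : A δ = cosetOf d W := by
        rw [hW]; exact cosetOf_rebase (by rw [← hW]; exact hdA)
      have e2 : cosetOf a (I α₀) = cosetOf d (I α₀) := cosetOf_rebase hd1
      rw [hDdef]
      simp only [e1, e2]
      exact cosetOf_inter d W (I α₀)
    have key2 : ∀ γ, ∃ M ∈ {T | ∃ δ, I δ ≤ I γ ∧ I δ ≤ I α₀ ∧ T = trJ (D δ) (I γ)},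
        ∀ T ∈ {T | ∃ δ, I δ ≤ I γ ∧ I δ ≤ I α₀ ∧ T = trJ (D δ) (I γ)}, M ⊆ T := by
      intro γ
      apply exists_min_coset (I γ)
      · obtain ⟨δ, hδ⟩ := hdir γ α₀
        exact ⟨trJ (D δ) (I γ), δ, hδ.trans inf_le_left, hδ.trans inf_le_right, rfl⟩
      · rintro T ⟨δ, hδγ, hδα₀, rfl⟩
        obtain ⟨d, W', hDW⟩ := hDcos δ hδα₀
        exact ⟨d, W' ⊔ I γ, le_sup_right, by rw [hDW, trJ_cosetOf]⟩
      · rintro T ⟨δ₁, h1γ, h1α, rfl⟩ T' ⟨δ₂, h2γ, h2α, rfl⟩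
        obtain ⟨δ₃, hδ₃⟩ := hdir δ₁ δ₂
        have h31 : I δ₃ ≤ I δ₁ := hδ₃.trans inf_le_left
        have h32 : I δ₃ ≤ I δ₂ := hδ₃.trans inf_le_right
        exact ⟨trJ (D δ₃) (I γ), ⟨δ₃, h31.trans h1γ, h31.trans h1α, rfl⟩,
          trJ_mono (hDmono δ₁ δ₃ h31) le_rfl, trJ_mono (hDmono δ₂ δ₃ h32) le_rfl⟩
    choose B hBmem hBmin using key2
    have hBsubA : ∀ γ, B γ ⊆ A γ := by
      intro γ
      obtain ⟨δ, hδγ, hδα, hT⟩ := hBmem γ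
      obtain ⟨v, W, hJW, hW⟩ := hAcos γ
      calc B γ = trJ (D δ) (I γ) := hT
        _ ⊆ trJ (A γ) (I γ) := trJ_mono ((hDsub δ).trans (hAcompat γ δ hδγ)) le_rfl
        _ = A γ := by rw [hW, trJ_cosetOf_self hJW]
    have hAdmB : Adm B := by
      refine ⟨?_, fun γ => (hBsubA γ).trans (hAS γ), ?_⟩
      · intro γ
        obtain ⟨δ, hδγ, hδα, hT⟩ := hBmem γ
        obtain ⟨d, W', hDW⟩ := hDcos δ hδα
        exact ⟨d, W' ⊔ I γ, le_sup_right, by rw [hT, hDW, trJ_cosetOf]⟩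
      · intro α β hle
        obtain ⟨δ, hδα, hδα₀, hT⟩ := hBmem α
        obtain ⟨δ', hδ'⟩ := hdir δ β
        have hd1 : I δ' ≤ I δ := hδ'.trans inf_le_left
        have hd2 : I δ' ≤ I β := hδ'.trans inf_le_right
        have h1 : B β ⊆ trJ (D δ') (I β) :=
          hBmin β _ ⟨δ', hd2, hd1.trans hδα₀, rfl⟩
        rw [hT]
        exact h1.trans (trJ_mono (hDmono δ δ' hd1) hle)
    have hAB : ∀ γ, A γ ⊆ B γ := hAmin B hAdmB hBsubA
    obtain ⟨δ, hδ⟩ := hdir α₀ α₀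
    have h2 : B α₀ ⊆ trJ (D δ) (I α₀) :=
      hBmin α₀ _ ⟨δ, hδ.trans inf_le_left, hδ.trans inf_le_left, rfl⟩
    have h3 : trJ (D δ) (I α₀) ⊆ cosetOf a (I α₀) := by
      have := trJ_mono (hDsub' δ) (le_refl (I α₀))
      rwa [trJ_cosetOf, sup_idem] at this
    exact (hAB α₀).trans (h2.trans h3)
  -- conclusion
  have hne : ∀ α, ∃ v, v ∈ A α := by
    intro α
    obtain ⟨v, W, hJW, hW⟩ := hAcos α
    exact ⟨v, by rw [hW]; exact self_mem_cosetOf v W⟩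
  choose a ha using hne
  exact ⟨a, fun α => hAS α (ha α),
    fun α β hle => hsingle α _ _ (hAcompat α β hle (ha β)) (ha α)⟩

end Selection


/-- In a complete enriched Lie algebra, for `x ∈ L` the centralizer
`C = {y | ⁅x,y⁆ = 0}` is the inverse limit of the centralizers `C_α ⊆ L/I_α`
(equivalently: `y ∈ C` iff `ρ_α y ∈ C_α` for all `α`, and `C` is closed);
consequently `[x, L]` is closed in `L`. -/
theorem stmt5 {ι L : Type*} [LieRing L] [LieAlgebra ℚ L]
    (I : ι → LieIdeal ℚ L) (hE : IsEnriched I) (hC : IsCompleteWrt I) (x : L) :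
    (∀ y : L, ⁅x, y⁆ = 0 ↔ ∀ α, ⁅x, y⁆ ∈ I α) ∧
    encl I (LinearMap.ker ((LieAlgebra.ad ℚ L) x)) = LinearMap.ker ((LieAlgebra.ad ℚ L) x) ∧
    encl I (LinearMap.range ((LieAlgebra.ad ℚ L) x)) =
      LinearMap.range ((LieAlgebra.ad ℚ L) x) := by
  obtain ⟨hdir, hfd, hnil, hbot⟩ := hE
  -- anything lying in every `I α` is zero
  have hzero : ∀ z : L, (∀ α, z ∈ (I α : Submodule ℚ L)) → z = 0 := by
    intro z hz
    have h1 : z ∈ (⨅ α, I α) := (LieSubmodule.mem_iInf _).2 fun α =>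
      (LieSubmodule.mem_toSubmodule _).1 (hz α)
    rw [hbot] at h1
    exact (LieSubmodule.mem_bot _).1 h1
  have part1 : ∀ y : L, ⁅x, y⁆ = 0 ↔ ∀ α, ⁅x, y⁆ ∈ I α := by
    intro y
    constructor
    · intro h α; rw [h]; exact (I α).zero_mem
    · intro h
      exact hzero _ fun α => (LieSubmodule.mem_toSubmodule _).2 (h α)
  refine ⟨part1, ?_, ?_⟩
  · -- the centralizer is closed
    apply le_antisymm
    · intro y hy
      have hy' : ∀ α, ∃ s ∈ LinearMap.ker ((LieAlgebra.ad ℚ L) x),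
          y - s ∈ (I α : Submodule ℚ L) := hy
      rw [LinearMap.mem_ker, LieAlgebra.ad_apply]
      apply (part1 y).2
      intro α
      obtain ⟨s, hs, hys⟩ := hy' α
      have hxs : ⁅x, s⁆ = 0 := by
        simpa [LieAlgebra.ad_apply] using hs
      have h2 : ⁅x, y - s⁆ ∈ I α :=
        (I α).lie_mem ((LieSubmodule.mem_toSubmodule _).1 hys)
      have h3 : ⁅x, y⁆ = ⁅x, y - s⁆ := by rw [lie_sub, hxs, sub_zero]
      rwa [h3]
    · intro y hy α
      exact ⟨y, hy, by simp⟩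
  · -- the image of `ad x` is closed
    apply le_antisymm
    · intro y hy
      have hy' : ∀ α, ∃ s ∈ LinearMap.range ((LieAlgebra.ad ℚ L) x),
          y - s ∈ (I α : Submodule ℚ L) := hy
      set f := (LieAlgebra.ad ℚ L) x with hf
      -- the fibres of `ad x` over `y` modulo `I α`
      set S : ι → Set L := fun α => {z : L | y - f z ∈ (I α : Submodule ℚ L)} with hS
      set K : ι → Submodule ℚ L := fun α =>
        Submodule.comap (f : L →ₗ[ℚ] L) (I α : Submodule ℚ L) with hK
      have hIK : ∀ α, (I α : Submodule ℚ L) ≤ K α := by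
        intro α z hz
        show f z ∈ (I α : Submodule ℚ L)
        rw [hf, LieAlgebra.ad_apply]
        exact (LieSubmodule.mem_toSubmodule _).2
          ((I α).lie_mem ((LieSubmodule.mem_toSubmodule _).1 hz))
      have hcoe : ∀ α β : ι, I β ≤ I α → (I β : Submodule ℚ L) ≤ (I α : Submodule ℚ L) := by
        intro α β h z hz
        exact (LieSubmodule.mem_toSubmodule _).2 (h ((LieSubmodule.mem_toSubmodule _).1 hz))
      have hdir' : ∀ α β : ι, ∃ γ, (I γ : Submodule ℚ L) ≤
          (I α : Submodule ℚ L) ⊓ (I β : Submodule ℚ L) := by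
        intro α β
        obtain ⟨γ, hγ⟩ := hdir α β
        refine ⟨γ, fun z hz => ?_⟩
        have h1 : z ∈ I α ⊓ I β := hγ ((LieSubmodule.mem_toSubmodule _).1 hz)
        rw [LieSubmodule.mem_inf] at h1
        exact Submodule.mem_inf.2 ⟨(LieSubmodule.mem_toSubmodule _).2 h1.1,
          (LieSubmodule.mem_toSubmodule _).2 h1.2⟩
      have hcos : ∀ α, IsCosetGe ((I α : Submodule ℚ L)) (S α) := by
        intro α
        obtain ⟨s, hs, hys⟩ := hy' α
        obtain ⟨t, rfl⟩ := hs
        refine ⟨t, K α, hIK α, ?_⟩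
        ext z
        constructor
        · intro hz
          show z - t ∈ K α
          have h1 : y - f z ∈ (I α : Submodule ℚ L) := hz
          have h2 : f z - f t ∈ (I α : Submodule ℚ L) := by
            have := sub_mem hys h1
            simpa using this
          show f (z - t) ∈ (I α : Submodule ℚ L)
          rw [map_sub]
          exact h2
        · intro hz
          have h2 : f z - f t ∈ (I α : Submodule ℚ L) := by
            have h3 : f (z - t) ∈ (I α : Submodule ℚ L) := hz
            rwa [map_sub] at h3
          show y - f z ∈ (I α : Submodule ℚ L)
          have h4 : y - f z = (y - f t) - (f z - f t) := by abel
          rw [h4]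
          exact sub_mem hys h2
      have hmono : ∀ α β : ι, (I β : Submodule ℚ L) ≤ (I α : Submodule ℚ L) →
          S β ⊆ S α := fun α β h z hz => h hz
      obtain ⟨a, ha1, ha2⟩ := coherent_selection (fun α => (I α : Submodule ℚ L))
        hdir' (fun α => hfd α) S hcos hmono
      obtain ⟨s, hs⟩ := hC a (fun α β h => ha2 α β (hcoe α β h))
      have hfinal : y - f s = 0 := by
        apply hzero
        intro α
        have h1 : y - f (a α) ∈ (I α : Submodule ℚ L) := ha1 α
        have h2 : f (s - a α) ∈ (I α : Submodule ℚ L) := hIK α (hs α)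
        have h3 : y - f s = (y - f (a α)) - f (s - a α) := by
          rw [map_sub]; abel
        rw [h3]
        exact sub_mem h1 h2
      exact ⟨s, (sub_eq_zero.mp hfinal).symm⟩
    · intro y hy α
      exact ⟨y, hy, by simp⟩
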